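/- If u and v are words over X^± reducing to the same element of FG(X) and the Munn tree T_u contains an edge not contained in T_v, and among such edges (w, wx) is one with w of minimal length (so that w and all edges along the path labelled w lie in both T_u and T_v), then u # v̄ ∈ K_{m,n} for some m, n ≥ 0, where m = |w| and n is the length of the reduced form of w⁻¹·π(u). -/

import Mathlib

/-- The symmetric alphabet `X^± = X ∪ X̄`, encoded as pairs (letter, sign). -/
abbrev Letter (X : Type) : Type := X × Bool

/-- Formal inverse of a letter. -/
def linv {X : Type} (a : Letter X) : Letter X := (a.1, !a.2)

/-- `wordInv v` is `v̄`: the reverse of `v` with every letter replaced by its inverse. -/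
def wordInv {X : Type} (v : List (Letter X)) : List (Letter X) := v.reverse.map linv

/-- The vertex set of the Munn tree of `w`: reductions of all prefixes of `w` in FG(X). -/
def munn {X : Type} (w : List (Letter X)) : Set (FreeGroup X) :=
  {g | ∃ p : List (Letter X), p <+: w ∧ FreeGroup.mk p = g}

/-- A word represents an idempotent of FIM(X) iff it reduces to 1 in FG(X). -/
def IsIdemWord {X : Type} (w : List (Letter X)) : Prop := FreeGroup.mk w = 1

/-- A word is reduced iff it has no adjacent mutually inverse letters. -/
def Reduced {X : Type} (w : List (Letter X)) : Prop :=
  List.Chain' (fun a b => b ≠ linv a) w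

/-- The Munn tree of `w` contains the edge from (the reduced word) `p` to `p · a`. -/
def EdgeIn {X : Type} (w : List (Letter X)) (p : List (Letter X)) (a : Letter X) : Prop :=
  Reduced (p ++ [a]) ∧ FreeGroup.mk p ∈ munn w ∧ FreeGroup.mk (p ++ [a]) ∈ munn w

/-- An idempotent word avoids `x` iff its Munn tree omits the edge `(ε, x)`. -/
def Avoids {X : Type} (w : List (Letter X)) (x : Letter X) : Prop := ¬ EdgeIn w [] x

/-- Equality in the free inverse monoid FIM(X): equality of Munn trees. -/
def EqFIM {X : Type} (u v : List (Letter X)) : Prop :=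
  FreeGroup.mk u = FreeGroup.mk v ∧ munn u = munn v

/-- The alphabet `X^± ∪ {#}`. -/
abbrev HSym (X : Type) : Type := Letter X ⊕ Unit

/-- The hashSym symbol. -/
def hashSym {X : Type} : HSym X := Sum.inr ()

/-- `encode u v = u # v̄`. -/
def encode {X : Type} (u v : List (Letter X)) : List (HSym X) :=
  u.map Sum.inl ++ hashSym :: (wordInv v).map Sum.inl


instance {T N : Type} [DecidableEq T] [DecidableEq N] : DecidableEq (ContextFreeRule T N) :=
  fun a b => decidable_of_iff (a.input = b.input ∧ a.output = b.output)
    (by cases a; cases b; simp)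

/-- Interleaving `e₁x₁e₂x₂⋯e_mx_m`. -/
def interE {X : Type} (es : List (List (Letter X))) (xs : List (Letter X)) : List (Letter X) :=
  (List.zipWith (fun e x => e ++ [x]) es xs).flatten

/-- Interleaving `y₁f₁y₂f₂⋯y_nf_n`. -/
def interF {X : Type} (ys : List (Letter X)) (fs : List (List (Letter X))) : List (Letter X) :=
  (List.zipWith (fun y f => y :: f) ys fs).flatten

/-- Derivability of a terminal word from a given nonterminal of a grammar. -/
def DerivesFrom {T : Type} (g : ContextFreeGrammar T) (n : g.NT) (w : List T) : Prop :=
  g.Derives [Symbol.nonterminal n] (w.map Symbol.terminal)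

/-- The language `K_{m,n}` of words `u # v̄` with
`u = e₁x₁⋯e_mx_m p₀ x p₁ x̄ p₂ y₁f₁⋯y_nf_n` and `v = e₁'x₁⋯e_m'x_m q y₁f₁'⋯y_nf_n'`,
the words `x₁⋯x_m x` and `y₁⋯y_n` reduced, `y₁ ≠ x`, all lowercase factors idempotent,
`eᵢ'` avoiding `xᵢ`, `fᵢ'` avoiding `ȳᵢ`, and `q` avoiding `x`. -/
def Kmn (X : Type) (m n : ℕ) : Language (HSym X) :=
  {w | ∃ (xs : List (Letter X)) (x : Letter X) (ys : List (Letter X))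
        (es fs es' fs' : List (List (Letter X))) (p0 p1 p2 q : List (Letter X)),
      xs.length = m ∧ ys.length = n ∧
      es.length = m ∧ fs.length = n ∧ es'.length = m ∧ fs'.length = n ∧
      Reduced (xs ++ [x]) ∧ Reduced ys ∧ ys.head? ≠ some x ∧
      (∀ e ∈ es, IsIdemWord e) ∧ IsIdemWord p0 ∧ IsIdemWord p1 ∧ IsIdemWord p2 ∧
      (∀ f ∈ fs, IsIdemWord f) ∧
      (∀ p ∈ es'.zip xs, IsIdemWord p.1 ∧ Avoids p.1 p.2) ∧
      IsIdemWord q ∧ Avoids q x ∧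
      (∀ p ∈ fs'.zip ys, IsIdemWord p.1 ∧ Avoids p.1 (linv p.2)) ∧
      w = encode
        (interE es xs ++ p0 ++ x :: (p1 ++ linv x :: (p2 ++ interF ys fs)))
        (interE es' xs ++ q ++ interF ys fs')}

set_option linter.unusedSectionVars false
set_option maxHeartbeats 1000000

namespace KP
open FreeGroup
variable {X : Type} [DecidableEq X]

lemma linv_linv (a : Letter X) : linv (linv a) = a := by simp [linv]

lemma linv_eq_comm {a b : Letter X} : a = linv b ↔ b = linv a := by
  constructor <;> (rintro rfl; simp [linv])

lemma invRev_singleton (a : Letter X) : invRev [a] = [linv a] := by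
  simp [invRev, linv]

lemma mk_linv_mul (a : Letter X) : FreeGroup.mk [linv a] * FreeGroup.mk [a] = 1 := by
  rw [← invRev_singleton, ← FreeGroup.inv_mk, inv_mul_cancel]

lemma mk_mul_linv (a : Letter X) : FreeGroup.mk [a] * FreeGroup.mk [linv a] = 1 := by
  rw [← invRev_singleton, ← FreeGroup.inv_mk, mul_inv_cancel]

lemma reduced_of_append_left {l₁ l₂ : List (Letter X)} (h : Reduced (l₁ ++ l₂)) : Reduced l₁ :=
  (List.isChain_append.mp h).1

lemma reduced_of_append_right {l₁ l₂ : List (Letter X)} (h : Reduced (l₁ ++ l₂)) : Reduced l₂ :=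
  (List.isChain_append.mp h).2.1

lemma reduced_of_prefix {l₁ l : List (Letter X)} (h : l₁ <+: l) (hl : Reduced l) : Reduced l₁ := by
  obtain ⟨t, rfl⟩ := h; exact reduced_of_append_left hl

lemma reduce_eq_self {L : List (Letter X)} (h : Reduced L) : FreeGroup.reduce L = L := by
  induction L with
  | nil => rfl
  | cons a t ih =>
    have ht : Reduced t := h.tail
    rw [FreeGroup.reduce.cons, ih ht]
    cases t with
    | nil => rfl
    | cons b t' =>
      have hab : b ≠ linv a := (List.isChain_cons_cons.mp h).1
      have : ¬(a.1 = b.1 ∧ a.2 = !b.2) := by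
        rintro ⟨h1, h2⟩
        exact hab (by simp [linv, Prod.ext_iff, h1, h2])
      simp [this]

lemma reduced_reduce (L : List (Letter X)) : Reduced (FreeGroup.reduce L) := by
  induction L with
  | nil => exact List.isChain_nil
  | cons a t ih =>
    rw [FreeGroup.reduce.cons]
    rcases h : FreeGroup.reduce t with _ | ⟨b, t'⟩
    · exact List.isChain_singleton a
    · rw [h] at ih
      by_cases hc : a.1 = b.1 ∧ a.2 = !b.2
      · simp only [hc, if_true]
        exact ih.tail
      · simp only [hc, if_false]
        refine List.isChain_cons_cons.mpr ⟨?_, ih⟩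
        rintro rfl
        exact hc ⟨rfl, by simp [linv]⟩

lemma toWord_mk_reduced {L : List (Letter X)} (h : Reduced L) : (FreeGroup.mk L).toWord = L := by
  rw [FreeGroup.toWord_mk, reduce_eq_self h]

lemma reduced_toWord (g : FreeGroup X) : Reduced g.toWord := by
  rw [← FreeGroup.reduce_toWord g]; exact reduced_reduce _

lemma eq_nil_of_reduced_mk_eq_one {L : List (Letter X)} (h : Reduced L)
    (h1 : FreeGroup.mk L = 1) : L = [] := by
  have := toWord_mk_reduced h
  rw [h1, FreeGroup.toWord_one] at this
  exact this.symm

lemma reduced_singleton (a : Letter X) : Reduced [a] := List.isChain_singleton a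

/-- Right multiplication by a single letter, on reduced words. -/
lemma toWord_mul_letter (g : FreeGroup X) (b : Letter X) :
    (g * FreeGroup.mk [b]).toWord =
      if g.toWord.getLast? = some (linv b) then g.toWord.dropLast else g.toWord ++ [b] := by
  set r := g.toWord with hr
  clear_value r
  have hred : Reduced r := hr ▸ reduced_toWord g
  have hg : FreeGroup.mk r = g := hr ▸ FreeGroup.mk_toWord
  by_cases h : r.getLast? = some (linv b)
  · rw [if_pos h]
    have hne : r ≠ [] := by rintro rfl; simp at h
    have hrl : r.dropLast ++ [linv b] = r := by
      have := List.dropLast_concat_getLast hne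
      rwa [List.getLast_eq_iff_getLast?_eq_some hne |>.mpr h] at this
    have hdred : Reduced r.dropLast := reduced_of_prefix ⟨[linv b], hrl⟩ hred
    have heq : g * FreeGroup.mk [b] = FreeGroup.mk r.dropLast := by
      rw [← hg]
      conv_lhs => rw [← hrl]
      rw [← FreeGroup.mul_mk, mul_assoc, mk_linv_mul, mul_one]
    rw [heq, toWord_mk_reduced hdred]
  · rw [if_neg h]
    have hred2 : Reduced (r ++ [b]) := by
      rw [Reduced, List.Chain', List.isChain_append]
      refine ⟨hred, List.isChain_singleton b, ?_⟩
      intro c hc y hy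
      simp only [List.head?_cons, Option.mem_def, Option.some.injEq] at hy
      subst hy
      intro hbc
      exact h (by rw [Option.mem_def.mp hc]; rw [hbc, linv_linv])
    rw [← hg, FreeGroup.mul_mk, toWord_mk_reduced hred2]


/-- `g` lies on the far side of the edge `(p, p·a)`. -/
def Far (p : List (Letter X)) (a : Letter X) (g : FreeGroup X) : Prop :=
  p ++ [a] <+: g.toWord

lemma prefix_concat_cases {l t : List (Letter X)} {b : Letter X}
    (h : l <+: t ++ [b]) : l <+: t ∨ l = t ++ [b] := by
  obtain ⟨s, hs⟩ := h
  rcases List.eq_nil_or_concat s with rfl | ⟨s', c, rfl⟩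
  · right; simpa using hs
  · left
    rw [List.concat_eq_append, ← List.append_assoc] at hs
    obtain ⟨h1, -⟩ := List.append_inj' hs rfl
    exact ⟨s', h1⟩

lemma cross_into {p : List (Letter X)} {a : Letter X} (hpa : Reduced (p ++ [a]))
    {g : FreeGroup X} {b : Letter X}
    (h1 : ¬ Far p a g) (h2 : Far p a (g * FreeGroup.mk [b])) :
    g = FreeGroup.mk p ∧ b = a := by
  unfold Far at h1 h2
  rw [toWord_mul_letter] at h2
  split_ifs at h2 with h
  · exact absurd (h2.trans (List.dropLast_prefix _)) h1
  · rcases prefix_concat_cases h2 with h' | h'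
    · exact absurd h' h1
    · obtain ⟨hp, ha⟩ := List.append_inj h' (by
        have := congrArg List.length h'
        simpa using this)
      have hg : g = FreeGroup.mk p := by
        rw [← FreeGroup.mk_toWord (x := g), hp]
      exact ⟨hg, (List.cons.injEq .. ▸ ha).1.symm⟩

lemma cross_out {p : List (Letter X)} {a : Letter X} (hpa : Reduced (p ++ [a]))
    {g : FreeGroup X} {b : Letter X}
    (h1 : Far p a g) (h2 : ¬ Far p a (g * FreeGroup.mk [b])) :
    g = FreeGroup.mk (p ++ [a]) ∧ b = linv a := by
  unfold Far at h1 h2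
  rw [toWord_mul_letter] at h2
  split_ifs at h2 with h
  · -- g.toWord = dropLast ++ [linv b]
    have hne : g.toWord ≠ [] := by rintro he; rw [he] at h; simp at h
    have hrl : g.toWord.dropLast ++ [linv b] = g.toWord := by
      have := List.dropLast_concat_getLast hne
      rwa [List.getLast_eq_iff_getLast?_eq_some hne |>.mpr h] at this
    rw [← hrl] at h1
    rcases prefix_concat_cases h1 with h' | h'
    · exact absurd h' h2
    · obtain ⟨hp, ha⟩ := List.append_inj h' (by
        have := congrArg List.length h'
        simpa using this)
      have ha' : a = linv b := (List.cons.injEq .. ▸ ha).1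
      refine ⟨?_, by rw [ha', linv_linv]⟩
      rw [← FreeGroup.mk_toWord (x := g), ← hrl, ← hp, ← ha']
  · exact absurd (h1.trans (List.prefix_append _ _)) h2

section Scan
variable {p : List (Letter X)} {a : Letter X}

lemma mk_append_letter (c : List (Letter X)) (b : Letter X) :
    FreeGroup.mk (c ++ [b]) = FreeGroup.mk c * FreeGroup.mk [b] :=
  (FreeGroup.mul_mk).symm

lemma first_forward (hpa : Reduced (p ++ [a])) :
    ∀ (r c : List (Letter X)), ¬ Far p a (FreeGroup.mk c) → Far p a (FreeGroup.mk (c ++ r)) →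
    ∃ r₁ r₂, r = r₁ ++ a :: r₂ ∧ FreeGroup.mk (c ++ r₁) = FreeGroup.mk p ∧
      ∀ pre, pre <+: r₁ → ¬ Far p a (FreeGroup.mk (c ++ pre)) := by
  intro r
  induction r with
  | nil => intro c h1 h2; rw [List.append_nil] at h2; exact absurd h2 h1
  | cons b t ih =>
    intro c h1 h2
    by_cases hb : Far p a (FreeGroup.mk (c ++ [b]))
    · rw [mk_append_letter] at hb
      obtain ⟨hcp, rfl⟩ := cross_into hpa h1 hb
      refine ⟨[], t, rfl, by simpa using hcp, ?_⟩
      intro pre hpre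
      rw [List.prefix_nil.mp hpre, List.append_nil]
      exact h1
    · have h2' : Far p a (FreeGroup.mk ((c ++ [b]) ++ t)) := by
        rwa [List.append_assoc, List.singleton_append]
      obtain ⟨t₁, t₂, ht, hmk, hpref⟩ := ih (c ++ [b]) hb h2'
      refine ⟨b :: t₁, t₂, by simp [ht], by simpa using hmk, ?_⟩
      intro pre hpre
      rcases pre with _ | ⟨b', pre'⟩
      · rw [List.append_nil]; exact h1
      · obtain ⟨rfl, hpre'⟩ : b' = b ∧ pre' <+: t₁ := by
          rw [List.cons_prefix_cons] at hpre; exact hpre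
        have := hpref pre' hpre'
        simpa using this

lemma last_forward (hpa : Reduced (p ++ [a])) :
    ∀ (r c : List (Letter X)), ¬ Far p a (FreeGroup.mk c) → Far p a (FreeGroup.mk (c ++ r)) →
    ∃ r₁ r₂, r = r₁ ++ a :: r₂ ∧ FreeGroup.mk (c ++ r₁) = FreeGroup.mk p ∧
      ∀ pre, pre <+: r₂ → Far p a (FreeGroup.mk (c ++ r₁ ++ a :: pre)) := by
  intro r
  induction r using List.reverseRecOn with
  | nil => intro c h1 h2; rw [List.append_nil] at h2; exact absurd h2 h1
  | append_singleton t b ih =>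
    intro c h1 h2
    by_cases ht : Far p a (FreeGroup.mk (c ++ t))
    · obtain ⟨t₁, t₂, rfl, hmk, hpref⟩ := ih c h1 ht
      refine ⟨t₁, t₂ ++ [b], by simp, hmk, ?_⟩
      intro pre hpre
      rcases prefix_concat_cases hpre with h' | rfl
      · exact hpref pre h'
      · simpa using h2
    · rw [← List.append_assoc, mk_append_letter] at h2
      obtain ⟨hcp, rfl⟩ := cross_into hpa ht h2
      refine ⟨t, [], rfl, hcp, ?_⟩
      intro pre hpre
      rw [List.prefix_nil.mp hpre]
      rw [← mk_append_letter] at h2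
      simpa using h2

lemma last_backward (hpa : Reduced (p ++ [a])) :
    ∀ (r c : List (Letter X)), Far p a (FreeGroup.mk c) → ¬ Far p a (FreeGroup.mk (c ++ r)) →
    ∃ r₁ r₂, r = r₁ ++ linv a :: r₂ ∧ FreeGroup.mk (c ++ r₁) = FreeGroup.mk (p ++ [a]) ∧
      ∀ pre, pre <+: r₂ → ¬ Far p a (FreeGroup.mk (c ++ r₁ ++ linv a :: pre)) := by
  intro r
  induction r using List.reverseRecOn with
  | nil => intro c h1 h2; rw [List.append_nil] at h2; exact absurd h1 h2
  | append_singleton t b ih =>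
    intro c h1 h2
    by_cases ht : Far p a (FreeGroup.mk (c ++ t))
    · rw [← List.append_assoc, mk_append_letter] at h2
      obtain ⟨hcp, rfl⟩ := cross_out hpa ht h2
      refine ⟨t, [], rfl, hcp, ?_⟩
      intro pre hpre
      rw [List.prefix_nil.mp hpre]
      rw [← mk_append_letter] at h2
      simpa using h2
    · obtain ⟨t₁, t₂, ht', hmk, hpref⟩ := ih c h1 ht
      refine ⟨t₁, t₂ ++ [b], by simp [ht'], hmk, ?_⟩
      intro pre hpre
      rcases prefix_concat_cases hpre with h' | rfl
      · exact hpref pre h'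
      · subst ht'
        simpa using h2

/-- Walking a reduced word not starting with `a` from `mk p` never gets to the far
side of the edge `(p, p·a)`. -/
lemma not_far_of_head_ne (hpa : Reduced (p ++ [a])) :
    ∀ (zs : List (Letter X)), Reduced zs → zs.head? ≠ some a →
      ¬ Far p a (FreeGroup.mk p * FreeGroup.mk zs) := by
  intro zs
  induction zs using List.reverseRecOn with
  | nil =>
    intro _ _
    rw [FreeGroup.mul_mk, List.append_nil]
    unfold Far
    rw [toWord_mk_reduced (reduced_of_append_left hpa)]
    intro hcon
    have := hcon.length_le
    simp at this
  | append_singleton zs' b ih =>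
    intro hzs hhead hfar
    have hzs' : Reduced zs' := reduced_of_append_left hzs
    have hne : ¬ Far p a (FreeGroup.mk p * FreeGroup.mk zs') := by
      apply ih hzs'
      intro hh
      rcases zs' with _ | ⟨c, zs''⟩
      · simp at hh
      · simp only [List.head?_cons, Option.some.injEq] at hh
        exact hhead (by simp [hh])
    rw [← FreeGroup.mul_mk (L₁ := zs'), ← mul_assoc] at hfar
    obtain ⟨hg, rfl⟩ := cross_into hpa hne hfar
    have hone : FreeGroup.mk p * FreeGroup.mk zs' = FreeGroup.mk p * 1 := by
      rw [mul_one]; exact hg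
    have hz : zs' = [] := eq_nil_of_reduced_mk_eq_one hzs' (mul_left_cancel hone)
    subst hz
    simp at hhead

/-- Walking a reduced word not starting with `a⁻¹` from `mk (p ++ [a])` stays on the far
side of the edge `(p, p·a)`. -/
lemma far_persist (hpa : Reduced (p ++ [a])) :
    ∀ (zs : List (Letter X)), Reduced zs → zs.head? ≠ some (linv a) →
      Far p a (FreeGroup.mk (p ++ [a]) * FreeGroup.mk zs) := by
  intro zs
  induction zs using List.reverseRecOn with
  | nil =>
    intro _ _
    rw [FreeGroup.mul_mk, List.append_nil]
    unfold Far
    rw [toWord_mk_reduced hpa]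
  | append_singleton zs' b ih =>
    intro hzs hhead
    have hzs' : Reduced zs' := reduced_of_append_left hzs
    have hfar : Far p a (FreeGroup.mk (p ++ [a]) * FreeGroup.mk zs') := by
      apply ih hzs'
      intro hh
      rcases zs' with _ | ⟨c, zs''⟩
      · simp at hh
      · simp only [List.head?_cons, Option.some.injEq] at hh
        exact hhead (by simp [hh])
    by_contra hcon
    rw [← FreeGroup.mul_mk (L₁ := zs'), ← mul_assoc] at hcon
    obtain ⟨hg, rfl⟩ := cross_out hpa hfar hcon
    have hone : FreeGroup.mk (p ++ [a]) * FreeGroup.mk zs' = FreeGroup.mk (p ++ [a]) * 1 := by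
      rw [mul_one]; exact hg
    have hz : zs' = [] := eq_nil_of_reduced_mk_eq_one hzs' (mul_left_cancel hone)
    subst hz
    simp at hhead

end Scan

lemma invRev_concat (l : List (Letter X)) (c : Letter X) :
    FreeGroup.invRev (l ++ [c]) = linv c :: FreeGroup.invRev l := by
  simp [FreeGroup.invRev, linv]

lemma reduced_invRev {l : List (Letter X)} (h : Reduced l) : Reduced (FreeGroup.invRev l) := by
  unfold FreeGroup.invRev
  rw [Reduced, List.Chain', List.isChain_reverse]
  rw [List.isChain_map]
  apply h.imp
  intro a b hab
  intro hcon
  apply hab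
  have hb : linv (b.1, !b.2) = b := by simp [linv]
  rw [hb] at hcon
  exact hcon.symm

lemma mk_nil : FreeGroup.mk ([] : List (Letter X)) = 1 := FreeGroup.one_eq_mk.symm

lemma not_concat_prefix_self (l : List (Letter X)) (a : Letter X) : ¬ (l ++ [a] <+: l) := by
  intro h
  have := h.length_le
  simp at this

lemma idem_of_mk_append {c e : List (Letter X)} (h : FreeGroup.mk (c ++ e) = FreeGroup.mk c) :
    IsIdemWord e := by
  unfold IsIdemWord
  apply mul_left_cancel (a := FreeGroup.mk c)
  rw [mul_one, FreeGroup.mul_mk, h]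

lemma mk_append_congr {c d : List (Letter X)} (h : FreeGroup.mk c = FreeGroup.mk d)
    (t : List (Letter X)) : FreeGroup.mk (c ++ t) = FreeGroup.mk (d ++ t) := by
  rw [← FreeGroup.mul_mk, ← FreeGroup.mul_mk, h]

lemma far_of_mk_eq {p : List (Letter X)} {a : Letter X} (hpa : Reduced (p ++ [a]))
    {g : FreeGroup X} (h : g = FreeGroup.mk (p ++ [a])) : Far p a g := by
  unfold Far
  rw [h, toWord_mk_reduced hpa]

lemma interE_cons (e : List (Letter X)) (es : List (List (Letter X)))
    (x : Letter X) (xs : List (Letter X)) :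
    interE (e :: es) (x :: xs) = e ++ x :: interE es xs := by
  simp [interE]

lemma interF_concat {ys : List (Letter X)} {fs : List (List (Letter X))}
    (h : fs.length = ys.length) (b : Letter X) (f : List (Letter X)) :
    interF (ys ++ [b]) (fs ++ [f]) = interF ys fs ++ b :: f := by
  unfold interF
  rw [List.zipWith_append (h.symm)]
  simp

lemma mem_zip_of_mem_left {α β : Type*} :
    ∀ {l₁ : List α} {l₂ : List β}, l₁.length = l₂.length → ∀ {a}, a ∈ l₁ →
      ∃ b, (a, b) ∈ l₁.zip l₂ := by
  intro l₁
  induction l₁ with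
  | nil => intro l₂ h a ha; simp at ha
  | cons x t ih =>
    intro l₂ h a ha
    rcases l₂ with _ | ⟨y, t₂⟩
    · simp at h
    · rcases List.mem_cons.mp ha with rfl | ha'
      · exact ⟨y, by simp⟩
      · obtain ⟨b, hb⟩ := ih (by simpa using h) ha'
        exact ⟨b, by simp [hb]⟩

/-- reaching a vertex implies all edges on the geodesic to it are in the tree. -/
lemma edgeIn_of_prefix_reduced {u r p : List (Letter X)} {a : Letter X}
    (hr : Reduced r) (hmem : FreeGroup.mk r ∈ munn u) (hpre : p ++ [a] <+: r) :
    EdgeIn u p a := by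
  obtain ⟨pu, hpu, hmk⟩ := hmem
  have hpa : Reduced (p ++ [a]) := reduced_of_prefix hpre hr
  have h1 : ¬ Far p a (FreeGroup.mk ([] : List (Letter X))) := by
    unfold Far
    rw [mk_nil, FreeGroup.toWord_one]
    intro h
    have := h.length_le
    simp at this
  have h2 : Far p a (FreeGroup.mk ([] ++ pu)) := by
    unfold Far
    rw [List.nil_append, hmk, toWord_mk_reduced hr]
    exact hpre
  obtain ⟨r₁, r₂, heq, hmkp, -⟩ := first_forward hpa pu [] h1 h2
  rw [List.nil_append] at hmkp
  refine ⟨hpa, ⟨r₁, ?_, hmkp⟩, ⟨r₁ ++ [a], ?_, ?_⟩⟩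
  · exact List.IsPrefix.trans ⟨a :: r₂, heq.symm⟩ hpu
  · exact List.IsPrefix.trans ⟨r₂, by simp [heq]⟩ hpu
  · rw [← FreeGroup.mul_mk, ← FreeGroup.mul_mk, hmkp]

/-- Stage A: peeling off the first crossings of the edges along a geodesic. -/
lemma stageA {W : List (Letter X)} (hW : Reduced W) :
    ∀ (xs₂ xs₁ c r : List (Letter X)), (xs₁ ++ xs₂) <+: W →
      FreeGroup.mk c = FreeGroup.mk xs₁ →
      (∃ r', r' <+: r ∧ W <+: (FreeGroup.mk (c ++ r')).toWord) →
      ∃ es r₂ r'', es.length = xs₂.length ∧ r = interE es xs₂ ++ r₂ ∧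
        (∀ pr ∈ es.zip xs₂, IsIdemWord pr.1 ∧ Avoids pr.1 pr.2) ∧
        FreeGroup.mk (c ++ interE es xs₂) = FreeGroup.mk (xs₁ ++ xs₂) ∧
        r'' <+: r₂ ∧ W <+: (FreeGroup.mk (c ++ interE es xs₂ ++ r'')).toWord := by
  intro xs₂
  induction xs₂ with
  | nil =>
    intro xs₁ c r hxs hc hfp
    obtain ⟨r', hr', hfar⟩ := hfp
    exact ⟨[], r, r', rfl, by simp [interE], by simp, by simpa [interE] using hc,
      hr', by simpa [interE] using hfar⟩
  | cons x₀ xs₂' ih =>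
    intro xs₁ c r hxs hc hfp
    have hpre1 : xs₁ ++ [x₀] <+: W :=
      List.IsPrefix.trans ⟨xs₂', by simp⟩ hxs
    have hpa : Reduced (xs₁ ++ [x₀]) := reduced_of_prefix hpre1 hW
    have hxs₁ : Reduced xs₁ := reduced_of_append_left hpa
    obtain ⟨r', hr', hfar⟩ := hfp
    have hFarr' : Far xs₁ x₀ (FreeGroup.mk (c ++ r')) := hpre1.trans hfar
    have hnF : ¬ Far xs₁ x₀ (FreeGroup.mk c) := by
      unfold Far
      rw [hc, toWord_mk_reduced hxs₁]
      exact not_concat_prefix_self _ _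
    obtain ⟨e, t₂, heq, hmk, hpref⟩ := first_forward hpa r' c hnF hFarr'
    obtain ⟨s, rfl⟩ := hr'
    have hidem : IsIdemWord e := idem_of_mk_append (by rw [hmk, hc])
    have havoid : Avoids e x₀ := by
      rintro ⟨-, -, ⟨pe, hpe, hmkpe⟩⟩
      apply hpref pe hpe
      rw [List.nil_append] at hmkpe
      have : FreeGroup.mk (c ++ pe) = FreeGroup.mk (xs₁ ++ [x₀]) := by
        rw [← FreeGroup.mul_mk, ← FreeGroup.mul_mk (L₁ := xs₁), hmkpe, hc]
      exact far_of_mk_eq hpa this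
    have hmk' : FreeGroup.mk (c ++ e ++ [x₀]) = FreeGroup.mk (xs₁ ++ [x₀]) :=
      mk_append_congr hmk [x₀]
    have hfp' : ∃ r'', r'' <+: t₂ ++ s ∧ W <+: (FreeGroup.mk (c ++ e ++ [x₀] ++ r'')).toWord := by
      refine ⟨t₂, ⟨s, rfl⟩, ?_⟩
      have : c ++ e ++ [x₀] ++ t₂ = c ++ (e ++ x₀ :: t₂) := by simp
      rw [this, ← heq]
      exact hfar
    have hr2 : r' ++ s = e ++ x₀ :: (t₂ ++ s) := by rw [heq]; simp
    obtain ⟨es', r₂, r'', hlen, hsplit, hzip, hmkall, hr''pre, hfar''⟩ :=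
      ih (xs₁ ++ [x₀]) (c ++ e ++ [x₀]) (t₂ ++ s) (by simpa using hxs) hmk' hfp'
    refine ⟨e :: es', r₂, r'', by simp [hlen], ?_, ?_, ?_, hr''pre, ?_⟩
    · rw [hr2, hsplit, interE_cons]; simp
    · intro pr hpr
      rcases List.mem_cons.mp (by simpa using hpr) with h' | h'
      · rw [h']; exact ⟨hidem, havoid⟩
      · exact hzip pr h'
    · rw [interE_cons, show c ++ (e ++ x₀ :: interE es' xs₂') = c ++ e ++ [x₀] ++ interE es' xs₂'
        by simp, hmkall]
      simp
    · rw [interE_cons, show c ++ (e ++ x₀ :: interE es' xs₂') ++ r''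
        = c ++ e ++ [x₀] ++ interE es' xs₂' ++ r'' by simp]
      exact hfar''


lemma getLast?_decomp {l : List (Letter X)} {c : Letter X} (h : l.getLast? = some c) :
    l.dropLast ++ [c] = l := by
  have hne : l ≠ [] := by rintro rfl; simp at h
  have := List.dropLast_concat_getLast hne
  rwa [List.getLast_eq_iff_getLast?_eq_some hne |>.mpr h] at this

/-- Stage D: peeling off the last crossings of the edges along the geodesic from the
base vertex to the endpoint, from the right. -/
lemma stageD {W : List (Letter X)} (hW : Reduced W) :
    ∀ (ys : List (Letter X)), Reduced ys →
    ∀ (c r : List (Letter X)), FreeGroup.mk c = FreeGroup.mk W →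
      FreeGroup.mk (c ++ r) = FreeGroup.mk W * FreeGroup.mk ys →
      ∃ q fs, fs.length = ys.length ∧ r = q ++ interF ys fs ∧
        (∀ pr ∈ fs.zip ys, IsIdemWord pr.1 ∧ Avoids pr.1 (linv pr.2)) ∧
        FreeGroup.mk (c ++ q) = FreeGroup.mk W := by
  intro ys
  induction ys using List.reverseRecOn with
  | nil =>
    intro _ c r hc hend
    rw [mk_nil, mul_one] at hend
    exact ⟨r, [], rfl, by simp [interF], by simp, hend⟩
  | append_singleton ys' b ih =>
    intro hys c r hc hend
    have hys' : Reduced ys' := reduced_of_append_left hys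
    set g' : FreeGroup X := FreeGroup.mk W * FreeGroup.mk ys' with hg'
    set P : List (Letter X) := g'.toWord with hP
    have hPred : Reduced P := reduced_toWord g'
    have hmkP : FreeGroup.mk P = g' := FreeGroup.mk_toWord
    -- the inverted geodesic back to the base does not start with b
    have hheadzs : (FreeGroup.invRev ys').head? ≠ some b := by
      rcases List.eq_nil_or_concat ys' with rfl | ⟨l, cc, hlc⟩
      · simp [FreeGroup.invRev]
      · rw [List.concat_eq_append] at hlc
        subst hlc
        rw [invRev_concat]
        simp only [List.head?_cons, ne_eq, Option.some.injEq]
        intro hcb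
        have hjun := (List.isChain_append.mp hys).2.2
        have hbc : b ≠ linv cc := by
          apply hjun cc _ b (by simp)
          simp
        exact hbc hcb.symm
    have hcdec : FreeGroup.mk c = FreeGroup.mk P * FreeGroup.mk (FreeGroup.invRev ys') := by
      rw [hmkP, ← FreeGroup.inv_mk, hc, hg', mul_assoc, mul_inv_cancel, mul_one]
    have hgn : FreeGroup.mk (c ++ r) = g' * FreeGroup.mk [b] := by
      rw [hend, hg', ← FreeGroup.mul_mk, mul_assoc]
    by_cases hup : P.getLast? = some (linv b)
    · -- "down" edge: the walk ends at the dropLast of P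
      set p : List (Letter X) := P.dropLast with hpdef
      have hrl : p ++ [linv b] = P := getLast?_decomp hup
      have hpa : Reduced (p ++ [linv b]) := by rw [hrl]; exact hPred
      have hFarc : Far p (linv b) (FreeGroup.mk c) := by
        have := far_persist hpa (FreeGroup.invRev ys') (reduced_invRev hys')
          (by rw [linv_linv]; exact hheadzs)
        rw [hrl] at this
        rw [← hcdec] at this
        exact this
      have hnFarEnd : ¬ Far p (linv b) (FreeGroup.mk (c ++ r)) := by
        unfold Far
        rw [hgn, toWord_mul_letter, ← hP, if_pos hup]
        exact not_concat_prefix_self _ _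
      obtain ⟨r₁, f, hsplit, hmk1, hpost⟩ := last_backward hpa r c hFarc hnFarEnd
      rw [linv_linv] at hsplit hpost
      rw [hrl, hmkP] at hmk1
      -- f is idempotent
      have hidem : IsIdemWord f := by
        have hkey : FreeGroup.mk (c ++ r₁ ++ [b]) * FreeGroup.mk f
            = FreeGroup.mk (c ++ r₁ ++ [b]) * 1 := by
          rw [mul_one, FreeGroup.mul_mk,
            show c ++ r₁ ++ [b] ++ f = c ++ (r₁ ++ b :: f) by simp, ← hsplit, hgn,
            ← FreeGroup.mul_mk (L₁ := c ++ r₁), hmk1]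
        exact mul_left_cancel hkey
      have havoid : Avoids f (linv b) := by
        rintro ⟨-, -, ⟨pf, hpf, hmkpf⟩⟩
        rw [List.nil_append] at hmkpf
        apply hpost pf hpf
        apply far_of_mk_eq hpa
        rw [show c ++ r₁ ++ b :: pf = (c ++ r₁ ++ [b]) ++ pf by simp, ← FreeGroup.mul_mk, hmkpf,
          ← FreeGroup.mul_mk, hmk1, ← hmkP, ← hrl, ← FreeGroup.mul_mk]
        simp only [mul_assoc, mk_mul_linv, mul_one]
      obtain ⟨q, fs', hlen, hsplit', hzip, hmkq⟩ := ih hys' c r₁ hc (by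
        rw [show c ++ r₁ = c ++ r₁ from rfl, hmk1, hg'])
      refine ⟨q, fs' ++ [f], by simp [hlen], ?_, ?_, hmkq⟩
      · rw [hsplit, hsplit', interF_concat hlen]
        simp
      · intro pr hpr
        rw [List.zip_append (by simp [hlen])] at hpr
        rcases List.mem_append.mp hpr with h' | h'
        · exact hzip pr h'
        · rw [show pr = (f, b) from by simpa using h']
          exact ⟨hidem, havoid⟩
    · -- "up" edge
      have hpa : Reduced (P ++ [b]) := by
        have : (g' * FreeGroup.mk [b]).toWord = P ++ [b] := by
          rw [toWord_mul_letter, ← hP, if_neg hup]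
        rw [← this]
        exact reduced_toWord _
      have hnFarc : ¬ Far P b (FreeGroup.mk c) := by
        have := not_far_of_head_ne hpa (FreeGroup.invRev ys') (reduced_invRev hys') hheadzs
        rw [← hcdec] at this
        exact this
      have hFarEnd : Far P b (FreeGroup.mk (c ++ r)) := by
        unfold Far
        rw [hgn, toWord_mul_letter, ← hP, if_neg hup]
      obtain ⟨r₁, f, hsplit, hmk1, hpost⟩ := last_forward hpa r c hnFarc hFarEnd
      rw [hmkP] at hmk1
      have hidem : IsIdemWord f := by
        have hkey : FreeGroup.mk (c ++ r₁ ++ [b]) * FreeGroup.mk f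
            = FreeGroup.mk (c ++ r₁ ++ [b]) * 1 := by
          rw [mul_one, FreeGroup.mul_mk,
            show c ++ r₁ ++ [b] ++ f = c ++ (r₁ ++ b :: f) by simp, ← hsplit, hgn,
            ← FreeGroup.mul_mk (L₁ := c ++ r₁), hmk1]
        exact mul_left_cancel hkey
      have havoid : Avoids f (linv b) := by
        rintro ⟨-, -, ⟨pf, hpf, hmkpf⟩⟩
        rw [List.nil_append] at hmkpf
        have hfar := hpost pf hpf
        have heq2 : FreeGroup.mk (c ++ r₁ ++ b :: pf) = FreeGroup.mk P := by
          rw [show c ++ r₁ ++ b :: pf = (c ++ r₁ ++ [b]) ++ pf by simp, ← FreeGroup.mul_mk, hmkpf,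
            ← FreeGroup.mul_mk, hmk1, ← hmkP, mul_assoc, mk_mul_linv, mul_one]
        unfold Far at hfar
        rw [heq2, toWord_mk_reduced hPred] at hfar
        exact not_concat_prefix_self _ _ hfar
      obtain ⟨q, fs', hlen, hsplit', hzip, hmkq⟩ := ih hys' c r₁ hc (by rw [hmk1, hg'])
      refine ⟨q, fs' ++ [f], by simp [hlen], ?_, ?_, hmkq⟩
      · rw [hsplit, hsplit', interF_concat hlen]
        simp
      · intro pr hpr
        rw [List.zip_append (by simp [hlen])] at hpr
        rcases List.mem_append.mp hpr with h' | h'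
        · exact hzip pr h'
        · rw [show pr = (f, b) from by simpa using h']
          exact ⟨hidem, havoid⟩


end KP

/-- If `u =_{FG(X)} v`, the edge `(w, wx)` lies in `T_u` but not in `T_v`, and among all
such edges `w` has minimal length, then `u # v̄ ∈ K_{m,n}` with `m = |w|` and `n` the
length of the reduced form of `w⁻¹·π(u)`. -/
theorem mem_Kmn_of_minimal_missing_edge {X : Type} [Fintype X] [DecidableEq X]
    (u v ws : List (Letter X)) (x : Letter X)
    (huv : FreeGroup.mk u = FreeGroup.mk v)
    (hred : Reduced (ws ++ [x]))
    (hedge : EdgeIn u ws x) (hnoedge : ¬ EdgeIn v ws x)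
    (hmin : ∀ (p : List (Letter X)) (a : Letter X),
      EdgeIn u p a → ¬ EdgeIn v p a → ws.length ≤ p.length) :
    encode u v ∈ Kmn X ws.length
      (FreeGroup.toWord ((FreeGroup.mk ws)⁻¹ * FreeGroup.mk u)).length := by
  classical
  obtain ⟨hredwx, hw_u, hwx_u⟩ := hedge
  have hws : Reduced ws := KP.reduced_of_append_left hred
  -- the path to `w` lies in both trees
  have hw_v : FreeGroup.mk ws ∈ munn v := by
    rcases List.eq_nil_or_concat ws with hnil | ⟨ws', xm, hws'⟩
    · subst hnil; exact ⟨[], List.nil_prefix, rfl⟩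
    · rw [List.concat_eq_append] at hws'
      have hedge' : EdgeIn u ws' xm := by
        apply KP.edgeIn_of_prefix_reduced hred hwx_u
        rw [← hws']
        exact List.prefix_append ws [x]
      have hv' : EdgeIn v ws' xm := by
        by_contra hno
        have := hmin ws' xm hedge' hno
        rw [hws'] at this
        simp at this
      obtain ⟨-, -, hmem⟩ := hv'
      exact hws' ▸ hmem
  have hwx_nv : FreeGroup.mk (ws ++ [x]) ∉ munn v := fun hmem => hnoedge ⟨hred, hw_v, hmem⟩
  set w : FreeGroup X := FreeGroup.mk ws with hwdef
  set ys : List (Letter X) := (w⁻¹ * FreeGroup.mk u).toWord with hysdef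
  have hysred : Reduced ys := KP.reduced_toWord _
  have hmku : FreeGroup.mk u = w * FreeGroup.mk ys := by
    rw [hysdef, FreeGroup.mk_toWord, ← mul_assoc, mul_inv_cancel, one_mul]
  -- `ys` does not start with `x`
  have hhead : ys.head? ≠ some x := by
    intro hh
    obtain ⟨ys'', hys2⟩ : ∃ t, ys = x :: t := by
      rcases hys3 : ys with _ | ⟨a, t⟩
      · rw [hys3] at hh; simp at hh
      · rw [hys3] at hh
        simp only [List.head?_cons, Option.some.injEq] at hh
        exact ⟨t, by rw [hh]⟩
    have hredall : Reduced (ws ++ ys) := by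
      rw [Reduced, List.Chain', List.isChain_append]
      refine ⟨hws, hysred, ?_⟩
      intro cl hcl y hy
      rw [hys2] at hy
      simp only [List.head?_cons, Option.mem_def, Option.some.injEq] at hy
      subst hy
      exact (List.isChain_append.mp hred).2.2 cl hcl x (by simp)
    have hmem : FreeGroup.mk (ws ++ ys) ∈ munn v := by
      refine ⟨v, List.prefix_refl v, ?_⟩
      rw [← FreeGroup.mul_mk, ← hmku, huv]
    exact hnoedge (KP.edgeIn_of_prefix_reduced hredall hmem ⟨ys'', by rw [hys2]; simp⟩)
  -- decompose u
  obtain ⟨pu, hpu, hpumk⟩ := hwx_u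
  obtain ⟨es, r₂, r'', hlen_es, hsplit_u, hzip_es, hmk_es, hr''pre, hfar''⟩ :=
    KP.stageA hred ws [] [] u (by simpa using List.prefix_append ws [x]) rfl
      ⟨pu, hpu, by rw [List.nil_append, hpumk, KP.toWord_mk_reduced hred]⟩
  simp only [List.nil_append] at hmk_es hfar''
  have hnF : ¬ KP.Far ws x (FreeGroup.mk (interE es ws)) := by
    unfold KP.Far
    rw [hmk_es, KP.toWord_mk_reduced hws]
    exact KP.not_concat_prefix_self _ _
  obtain ⟨p0, t, heq_r'', hmk_p0, -⟩ := KP.first_forward hred r'' (interE es ws) hnF hfar''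
  obtain ⟨s, hs⟩ := hr''pre
  have hmk_c2 : FreeGroup.mk (interE es ws ++ p0 ++ [x]) = FreeGroup.mk (ws ++ [x]) :=
    KP.mk_append_congr hmk_p0 [x]
  have hFarc2 : KP.Far ws x (FreeGroup.mk (interE es ws ++ p0 ++ [x])) :=
    KP.far_of_mk_eq hred hmk_c2
  have hueq1 : interE es ws ++ p0 ++ [x] ++ (t ++ s) = u := by
    rw [hsplit_u, ← hs, heq_r'']
    simp
  have hnFarEnd : ¬ KP.Far ws x (FreeGroup.mk (interE es ws ++ p0 ++ [x] ++ (t ++ s))) := by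
    rw [hueq1, hmku, hwdef]
    exact KP.not_far_of_head_ne hred ys hysred hhead
  obtain ⟨p1, t₂, heq_ts, hmk_p1, -⟩ :=
    KP.last_backward hred (t ++ s) (interE es ws ++ p0 ++ [x]) hFarc2 hnFarEnd
  have hmk_c3 : FreeGroup.mk (interE es ws ++ p0 ++ [x] ++ p1 ++ [linv x]) = FreeGroup.mk ws := by
    rw [KP.mk_append_congr hmk_p1 [linv x], ← FreeGroup.mul_mk, ← FreeGroup.mul_mk (L₁ := ws),
      mul_assoc, KP.mk_mul_linv, mul_one]
  have hueq2 : interE es ws ++ p0 ++ [x] ++ p1 ++ [linv x] ++ t₂ = u := by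
    rw [← hueq1, heq_ts]
    simp
  have hend_u : FreeGroup.mk ((interE es ws ++ p0 ++ [x] ++ p1 ++ [linv x]) ++ t₂)
      = FreeGroup.mk ws * FreeGroup.mk ys := by
    rw [hueq2, hmku, hwdef]
  obtain ⟨p2, fs, hlen_fs, heq_t₂, hzip_fs, hmk_p2⟩ :=
    KP.stageD hws ys hysred _ t₂ hmk_c3 hend_u
  -- decompose v
  obtain ⟨pv, hpv, hpvmk⟩ := hw_v
  obtain ⟨es', r₂', -, hlen_es', hsplit_v, hzip_es', hmk_es', -, -⟩ :=
    KP.stageA hws ws [] [] v (by simpa using List.prefix_refl ws) rfl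
      ⟨pv, hpv, by rw [List.nil_append, hpvmk, KP.toWord_mk_reduced hws]⟩
  simp only [List.nil_append] at hmk_es'
  have hend_v : FreeGroup.mk (interE es' ws ++ r₂') = FreeGroup.mk ws * FreeGroup.mk ys := by
    rw [← hsplit_v, ← huv, hmku, hwdef]
  obtain ⟨q, fs', hlen_fs', hsplit_q, hzip_fs', hmk_q⟩ :=
    KP.stageD hws ys hysred _ r₂' hmk_es' hend_v
  -- idempotency of the middle pieces
  have hp0 : IsIdemWord p0 := KP.idem_of_mk_append (by rw [hmk_p0, hmk_es])
  have hp1 : IsIdemWord p1 := KP.idem_of_mk_append (by rw [hmk_p1, hmk_c2])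
  have hp2 : IsIdemWord p2 := KP.idem_of_mk_append (by rw [hmk_p2, hmk_c3])
  have hq : IsIdemWord q := KP.idem_of_mk_append (by rw [hmk_q, hmk_es'])
  -- q avoids x
  have havq : Avoids q x := by
    rintro ⟨-, -, ⟨pq, hpq, hmkpq⟩⟩
    rw [List.nil_append] at hmkpq
    apply hwx_nv
    refine ⟨interE es' ws ++ pq, ?_, ?_⟩
    · have hpq' : pq <+: r₂' := hpq.trans ⟨interF ys fs', hsplit_q.symm⟩
      obtain ⟨tt, htt⟩ := hpq'
      refine ⟨tt, ?_⟩
      rw [List.append_assoc, htt, ← hsplit_v]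
    · rw [← FreeGroup.mul_mk, hmkpq, ← FreeGroup.mul_mk (L₁ := ws), hmk_es']
  -- the word equalities
  have hu_eq : u = interE es ws ++ p0 ++ x :: (p1 ++ linv x :: (p2 ++ interF ys fs)) := by
    rw [← hueq2, heq_t₂]
    simp
  have hv_eq : v = interE es' ws ++ q ++ interF ys fs' := by
    rw [hsplit_v, hsplit_q]
    simp
  refine ⟨ws, x, ys, es, fs, es', fs', p0, p1, p2, q, rfl, rfl, hlen_es, hlen_fs, hlen_es',
    hlen_fs', hred, hysred, hhead, ?_, hp0, hp1, hp2, ?_, hzip_es', hq, havq, hzip_fs', ?_⟩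
  · intro e he
    obtain ⟨b, hb⟩ := KP.mem_zip_of_mem_left hlen_es he
    exact (hzip_es _ hb).1
  · intro f hf
    obtain ⟨b, hb⟩ := KP.mem_zip_of_mem_left hlen_fs hf
    exact (hzip_fs _ hb).1
  · rw [← hu_eq, ← hv_eq]
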